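/- The set C₀ = {x ∈ ω^ω : x(0) = 0} belongs to the tree ideal cl₀, but does not belong to l₀, does not belong to m₀, and does not belong to s₀; in particular cl₀ is not contained in l₀ ∪ m₀ ∪ s₀. -/

import Mathlib

open Cardinal Set

/-- A tree on ω: a nonempty set of finite sequences closed under initial segments. -/
def IsTree (T : Set (List ℕ)) : Prop :=
  T.Nonempty ∧ ∀ s ∈ T, ∀ n : ℕ, s.take n ∈ T

/-- The body of a tree: all infinite branches. -/
def treeBody (T : Set (List ℕ)) : Set (ℕ → ℕ) :=
  {x | ∀ n : ℕ, (List.ofFn fun i : Fin n => x i) ∈ T}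

/-- Immediate successors of a node in a tree. -/
def succs (T : Set (List ℕ)) (t : List ℕ) : Set ℕ := {n | t ++ [n] ∈ T}

/-- Sacks (perfect) tree: every node has an extension with at least two immediate successors. -/
def IsSacksTree (T : Set (List ℕ)) : Prop :=
  IsTree T ∧ ∀ s ∈ T, ∃ t ∈ T, s <+: t ∧ (succs T t).Nontrivial

/-- Miller tree: every node has an extension with infinitely many immediate successors. -/
def IsMillerTree (T : Set (List ℕ)) : Prop :=
  IsTree T ∧ ∀ s ∈ T, ∃ t ∈ T, s <+: t ∧ (succs T t).Infinite

/-- Laver tree: has a stem (a node comparable with every node) such that every node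
extending the stem has infinitely many immediate successors. -/
def IsLaverTree (T : Set (List ℕ)) : Prop :=
  IsTree T ∧ ∃ s ∈ T, (∀ t ∈ T, s <+: t ∨ t <+: s) ∧
    ∀ t ∈ T, s <+: t → (succs T t).Infinite

/-- Complete Laver tree: every node has infinitely many immediate successors. -/
def IsCompleteLaverTree (T : Set (List ℕ)) : Prop :=
  IsTree T ∧ ∀ t ∈ T, (succs T t).Infinite

/-- The tree ideal t₀ associated with a family of trees 𝕋. -/
def treeIdeal (𝕋 : Set (Set (List ℕ))) : Set (Set (ℕ → ℕ)) :=
  {A | ∀ P ∈ 𝕋, ∃ Q ∈ 𝕋, Q ⊆ P ∧ treeBody Q ∩ A = ∅}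

/-- t-measurability with respect to a family of trees 𝕋. -/
def TMeasurable (𝕋 : Set (Set (List ℕ))) (A : Set (ℕ → ℕ)) : Prop :=
  ∀ P ∈ 𝕋, ∃ Q ∈ 𝕋, Q ⊆ P ∧ (treeBody Q ⊆ A ∨ treeBody Q ∩ A = ∅)

/-- 𝕋-Bernstein set: meets and omits the body of every tree in 𝕋. -/
def TBernstein (𝕋 : Set (Set (List ℕ))) (B : Set (ℕ → ℕ)) : Prop :=
  ∀ T ∈ 𝕋, (B ∩ treeBody T).Nonempty ∧ (B \ treeBody T).Nonempty

lemma nil_mem {T : Set (List ℕ)} (hT : IsTree T) : ([] : List ℕ) ∈ T := by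
  obtain ⟨⟨s, hs⟩, h⟩ := hT
  simpa using h s hs 0

lemma ext_step {T : Set (List ℕ)} (hT : IsTree T) {s t : List ℕ} (ht : t ∈ T)
    (hpre : s <+: t) (hlen : s.length < t.length) : ∃ k, s ++ [k] ∈ T := by
  obtain ⟨r, rfl⟩ := hpre
  cases r with
  | nil => simp at hlen
  | cons a r =>
    refine ⟨a, ?_⟩
    have := hT.2 _ ht (s.length + 1)
    simpa [List.take_append, List.take_of_length_le (Nat.le_succ s.length)] using this

lemma getD_concat (l : List ℕ) (c : ℕ) : (l ++ [c]).getD l.length 0 = c := by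
  simp [List.getD, List.getElem?_concat_length]

lemma body_nonempty {T : Set (List ℕ)} (hT : IsTree T)
    (h : ∀ t ∈ T, ∃ k, t ++ [k] ∈ T) : (treeBody T).Nonempty := by
  classical
  let step : List ℕ → List ℕ := fun t =>
    if ht : t ∈ T then t ++ [(h t ht).choose] else t
  let u : ℕ → List ℕ := fun n => step^[n] []
  have hstep : ∀ t (ht : t ∈ T), step t = t ++ [(h t ht).choose] := by
    intro t ht; simp [step, ht]
  have hu : ∀ n, u n ∈ T := by
    intro n
    induction n with
    | zero => simpa [u] using nil_mem hT
    | succ n ih =>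
      have : u (n+1) = step (u n) := Function.iterate_succ_apply' step n []
      rw [this, hstep _ ih]
      exact (h (u n) ih).choose_spec
  have hsucc : ∀ n, u (n+1) = u n ++ [(h (u n) (hu n)).choose] := by
    intro n
    have : u (n+1) = step (u n) := Function.iterate_succ_apply' step n []
    rw [this, hstep _ (hu n)]
  have hlen : ∀ n, (u n).length = n := by
    intro n
    induction n with
    | zero => simp [u]
    | succ n ih => rw [hsucc n]; simp [ih]
  let x : ℕ → ℕ := fun n => (u (n+1)).getD n 0
  have hofn : ∀ n, (List.ofFn fun i : Fin n => x i) = u n := by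
    intro n
    induction n with
    | zero => simp [u]
    | succ n ih =>
      rw [List.ofFn_succ']
      have hx : x n = (h (u n) (hu n)).choose := by
        have h2 := getD_concat (u n) (h (u n) (hu n)).choose
        rw [hlen n] at h2
        simp only [x, hsucc n]
        exact h2
      simp only [Fin.coe_castSucc, Fin.val_last, List.concat_eq_append, ih, hx]
      exact (hsucc n).symm
  exact ⟨x, fun n => (hofn n) ▸ hu n⟩

lemma sacks_succs {T : Set (List ℕ)} (h : IsSacksTree T) :
    ∀ t ∈ T, ∃ k, t ++ [k] ∈ T := by
  intro s hs
  obtain ⟨t, ht, hpre, hnt⟩ := h.2 s hs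
  obtain ⟨k, hk⟩ := hnt.nonempty
  exact ext_step h.1 hk (hpre.trans (List.prefix_append t [k]))
    (by simp; exact hpre.length_le)

lemma miller_succs {T : Set (List ℕ)} (h : IsMillerTree T) :
    ∀ t ∈ T, ∃ k, t ++ [k] ∈ T := by
  intro s hs
  obtain ⟨t, ht, hpre, hnt⟩ := h.2 s hs
  obtain ⟨k, hk⟩ := hnt.nonempty
  exact ext_step h.1 hk (hpre.trans (List.prefix_append t [k]))
    (by simp; exact hpre.length_le)

lemma laver_succs {T : Set (List ℕ)} (h : IsLaverTree T) :
    ∀ t ∈ T, ∃ k, t ++ [k] ∈ T := by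
  intro t ht
  obtain ⟨st, hst, hcomp, hinf⟩ := h.2
  rcases hcomp t ht with h1 | h2
  · exact (hinf t ht h1).nonempty
  · rcases lt_or_ge t.length st.length with hl | hl
    · exact ext_step h.1 hst h2 hl
    · have : t = st := h2.eq_of_length (le_antisymm h2.length_le hl)
      subst this
      exact (hinf t ht List.prefix_rfl).nonempty

/-- The tree of sequences that are empty or start with 0. -/
def P0 : Set (List ℕ) := {t | t = [] ∨ ∃ r, t = 0 :: r}

lemma P0_tree : IsTree P0 := by
  constructor
  · exact ⟨[], Or.inl rfl⟩
  · rintro s (rfl | ⟨r, rfl⟩) n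
    · simp [P0]
    · cases n with
      | zero => exact Or.inl rfl
      | succ n => exact Or.inr ⟨r.take n, by simp⟩

lemma P0_succs {t : List ℕ} (ht : ∃ r, t = 0 :: r) : succs P0 t = Set.univ := by
  obtain ⟨r, rfl⟩ := ht
  ext n
  simp [succs, P0]

lemma P0_laver : IsLaverTree P0 := by
  refine ⟨P0_tree, [0], Or.inr ⟨[], rfl⟩, ?_, ?_⟩
  · rintro t (rfl | ⟨r, rfl⟩)
    · exact Or.inr (List.nil_prefix)
    · exact Or.inl (by simp [List.cons_prefix_cons])
  · rintro t (rfl | ⟨r, rfl⟩) hpre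
    · simp at hpre
    · rw [P0_succs ⟨r, rfl⟩]; exact Set.infinite_univ

lemma P0_miller : IsMillerTree P0 := by
  refine ⟨P0_tree, ?_⟩
  rintro s hs
  refine ⟨0 :: s.tail, Or.inr ⟨s.tail, rfl⟩, ?_, ?_⟩
  · rcases hs with rfl | ⟨r, rfl⟩
    · exact List.nil_prefix
    · simp
  · rw [P0_succs ⟨s.tail, rfl⟩]; exact Set.infinite_univ

lemma P0_sacks : IsSacksTree P0 := by
  refine ⟨P0_tree, ?_⟩
  rintro s hs
  refine ⟨0 :: s.tail, Or.inr ⟨s.tail, rfl⟩, ?_, ?_⟩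
  · rcases hs with rfl | ⟨r, rfl⟩
    · exact List.nil_prefix
    · simp
  · rw [P0_succs ⟨s.tail, rfl⟩]
    exact ⟨0, trivial, 1, trivial, by norm_num⟩

lemma not_mem_aux {𝕋 : Set (Set (List ℕ))} (hP : P0 ∈ 𝕋)
    (htree : ∀ T ∈ 𝕋, IsTree T)
    (hsucc : ∀ T ∈ 𝕋, ∀ t ∈ T, ∃ k, t ++ [k] ∈ T) :
    {x : ℕ → ℕ | x 0 = 0} ∉ treeIdeal 𝕋 := by
  intro h
  obtain ⟨Q, hQ, hQP, hdisj⟩ := h P0 hP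
  obtain ⟨x, hx⟩ := body_nonempty (htree Q hQ) (hsucc Q hQ)
  have h1 : [x 0] ∈ P0 := hQP (by simpa using hx 1)
  have hx0 : x 0 = 0 := by
    rcases h1 with h | ⟨r, hr⟩
    · simp at h
    · simp at hr; exact hr.1
  have : x ∈ treeBody Q ∩ {x : ℕ → ℕ | x 0 = 0} := ⟨hx, hx0⟩
  rw [hdisj] at this
  exact this

lemma head?_take {t : List ℕ} {n : ℕ} {k : ℕ} (h : (t.take n).head? = some k) :
    t.head? = some k := by
  cases n with
  | zero => simp at h
  | succ n => cases t with
    | nil => simp at h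
    | cons a r => simpa using h

lemma mem_cl0 : {x : ℕ → ℕ | x 0 = 0} ∈ treeIdeal {T | IsCompleteLaverTree T} := by
  intro P hP
  obtain ⟨hPt, hPs⟩ := hP
  refine ⟨{t ∈ P | t.head? ≠ some 0}, ⟨⟨⟨[], nil_mem hPt, by simp⟩, ?_⟩, ?_⟩,
    fun t ht => ht.1, ?_⟩
  · rintro s ⟨hs, hh⟩ n
    refine ⟨hPt.2 s hs n, ?_⟩
    intro hc
    exact hh (head?_take hc)
  · rintro t ⟨ht, hh⟩
    cases t with
    | nil =>
      have : succs P [] \ {0} ⊆ succs {t ∈ P | t.head? ≠ some 0} [] := by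
        rintro n ⟨hn, hn0⟩
        refine ⟨hn, by simpa using hn0⟩
      exact ((hPs [] ht).diff (Set.finite_singleton 0)).mono this
    | cons a r =>
      have : succs P (a :: r) ⊆ succs {t ∈ P | t.head? ≠ some 0} (a :: r) := by
        rintro n hn
        exact ⟨hn, by simpa using hh⟩
      exact (hPs _ ht).mono this
  · ext x
    simp only [Set.mem_inter_iff, Set.mem_empty_iff_false, iff_false]
    rintro ⟨hb, hx0⟩
    have h1 := hb 1
    simp only [List.ofFn_succ, List.ofFn_zero, Set.mem_setOf_eq, Set.mem_sep_iff] at h1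
    exact h1.2 (by simp [show x 0 = 0 from hx0])


/-- C₀ = {x | x 0 = 0} belongs to cl₀ but not to l₀, m₀ or s₀;
in particular cl₀ ⊄ l₀ ∪ m₀ ∪ s₀. -/
theorem stmt0 :
    ({x : ℕ → ℕ | x 0 = 0} ∈ treeIdeal {T | IsCompleteLaverTree T} ∧
      {x : ℕ → ℕ | x 0 = 0} ∉ treeIdeal {T | IsLaverTree T} ∧
      {x : ℕ → ℕ | x 0 = 0} ∉ treeIdeal {T | IsMillerTree T} ∧
      {x : ℕ → ℕ | x 0 = 0} ∉ treeIdeal {T | IsSacksTree T}) ∧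
    ¬ treeIdeal {T | IsCompleteLaverTree T} ⊆
        treeIdeal {T | IsLaverTree T} ∪ treeIdeal {T | IsMillerTree T} ∪
          treeIdeal {T | IsSacksTree T} := by
  have hl : {x : ℕ → ℕ | x 0 = 0} ∉ treeIdeal {T | IsLaverTree T} :=
    not_mem_aux P0_laver (fun T hT => hT.1) (fun T hT => laver_succs hT)
  have hm : {x : ℕ → ℕ | x 0 = 0} ∉ treeIdeal {T | IsMillerTree T} :=
    not_mem_aux P0_miller (fun T hT => hT.1) (fun T hT => miller_succs hT)
  have hs : {x : ℕ → ℕ | x 0 = 0} ∉ treeIdeal {T | IsSacksTree T} :=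
    not_mem_aux P0_sacks (fun T hT => hT.1) (fun T hT => sacks_succs hT)
  refine ⟨⟨mem_cl0, hl, hm, hs⟩, ?_⟩
  intro hsub
  rcases hsub mem_cl0 with (h | h) | h
  · exact hl h
  · exact hm h
  · exact hs h
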